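/- The group 𝒯 of tadpole matrices is (1/(2p²))-argument-submultiplicative: for all A, B ∈ 𝒯 and every eigenvalue γ of AB, there exist eigenvalues α of A and β of B such that (1/2π)|arg(αβ/γ)| ≤ 1/(2p²). -/

import Mathlib

open Matrix

/-- The `p × p` cyclic permutation matrix. -/
def cycleMatrix (p : ℕ) : Matrix (Fin p) (Fin p) ℂ :=
  Matrix.of fun i j => if (j : ℕ) = ((i : ℕ) + 1) % p then 1 else 0

/-- The fixed primitive `p²`-th root of unity `ξ = e^{2πi/p²}`. -/
noncomputable def xi (p : ℕ) : ℂ := Complex.exp (2 * Real.pi * Complex.I / (p ^ 2))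

/-- The tadpole matrix with head `D C^k` (where `D = diagonal d`) and tail
`diag(ξ^{0·k + a_0 p}, ξ^{1·k + a_1 p}, …, ξ^{(p-1)k + a_{p-1} p})`.
We index the `2p × 2p` matrix by `Fin p ⊕ Fin p`. -/
noncomputable def tadpole (p : ℕ) (d : Fin p → ℂ) (k : ℕ) (a : Fin p → ℕ) :
    Matrix (Fin p ⊕ Fin p) (Fin p ⊕ Fin p) ℂ :=
  Matrix.fromBlocks (Matrix.diagonal d * cycleMatrix p ^ k) 0 0
    (Matrix.diagonal fun j : Fin p => xi p ^ ((j : ℕ) * k + a j * p))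

/-- Membership in the set `𝒯` of tadpole matrices: `D` is unitary diagonal of
determinant one, `k ∈ {0, …, p-1}`, `a_j ∈ {0, …, p-1}` and `a_0 = 0` (so the first
tail entry is `1`). -/
def IsTadpole (p : ℕ) (A : Matrix (Fin p ⊕ Fin p) (Fin p ⊕ Fin p) ℂ) : Prop :=
  ∃ (d : Fin p → ℂ) (k : ℕ) (a : Fin p → ℕ),
    (∀ i, ‖d i‖ = 1) ∧ (∏ i, d i = 1) ∧ k < p ∧ (∀ j, a j < p) ∧
    (∀ j : Fin p, (j : ℕ) = 0 → a j = 0) ∧ A = tadpole p d k a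

lemma cycleMatrix_pow_apply (p : ℕ) (k : ℕ) (i j : Fin p) :
    (cycleMatrix p ^ k) i j = if (j : ℕ) = ((i : ℕ) + k) % p then 1 else 0 := by
  induction k generalizing j with
  | zero =>
    simp only [pow_zero, Matrix.one_apply, Nat.add_zero, Nat.mod_eq_of_lt i.isLt]
    simp [Fin.ext_iff, eq_comm]
  | succ k ih =>
    have hp : 0 < p := i.pos
    rw [pow_succ, Matrix.mul_apply]
    rw [Finset.sum_eq_single (⟨((i : ℕ) + k) % p, Nat.mod_lt _ hp⟩ : Fin p)]
    · rw [ih]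
      simp only [cycleMatrix, Matrix.of_apply]
      have h2 : (((i : ℕ) + k) % p + 1) % p = ((i : ℕ) + (k + 1)) % p := by
        have h := (Nat.mod_modEq ((i:ℕ)+k) p).add_right 1
        simpa [Nat.add_assoc] using h
      simp [h2]
    · intro l _ hl
      rw [ih]
      have : ¬ ((l : ℕ) = ((i : ℕ) + k) % p) := fun h => hl (Fin.ext h)
      simp [this]
    · intro h; exact absurd (Finset.mem_univ _) h

lemma head_apply (p : ℕ) (d : Fin p → ℂ) (m : ℕ) (i j : Fin p) :
    (Matrix.diagonal d * cycleMatrix p ^ m) i j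
      = if (j : ℕ) = ((i : ℕ) + m) % p then d i else 0 := by
  rw [Matrix.diagonal_mul, cycleMatrix_pow_apply, mul_ite, mul_one, mul_zero]

lemma head_pow_apply (p : ℕ) (d : Fin p → ℂ) (m : ℕ) (t : ℕ) (i j : Fin p) :
    ((Matrix.diagonal d * cycleMatrix p ^ m) ^ t) i j
      = if (j : ℕ) = ((i : ℕ) + t * m) % p then
          (∏ s ∈ Finset.range t, d ⟨((i : ℕ) + s * m) % p, Nat.mod_lt _ i.pos⟩) else 0 := by
  have hp : 0 < p := i.pos
  induction t generalizing j with
  | zero =>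
    simp only [pow_zero, Matrix.one_apply, Nat.zero_mul, Nat.add_zero,
      Nat.mod_eq_of_lt i.isLt, Finset.range_zero, Finset.prod_empty]
    simp [Fin.ext_iff, eq_comm]
  | succ t ih =>
    rw [pow_succ, Matrix.mul_apply]
    rw [Finset.sum_eq_single (⟨((i : ℕ) + t * m) % p, Nat.mod_lt _ hp⟩ : Fin p)]
    · rw [ih, head_apply]
      have h2 : (((i : ℕ) + t * m) % p + m) % p = ((i : ℕ) + (t + 1) * m) % p := by
        have h := (Nat.mod_modEq ((i:ℕ) + t * m) p).add_right m
        simpa [Nat.add_assoc, Nat.succ_mul] using h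
      simp only [if_pos rfl, h2, Finset.prod_range_succ]
      by_cases hj : (j : ℕ) = ((i : ℕ) + (t + 1) * m) % p <;> simp [hj]
    · intro l _ hl
      rw [ih]
      have : ¬ ((l : ℕ) = ((i : ℕ) + t * m) % p) := fun h => hl (Fin.ext h)
      simp [this]
    · intro h; exact absurd (Finset.mem_univ _) h

lemma head_pow_self (p : ℕ) (hp : p.Prime) (d : Fin p → ℂ) (m : ℕ) (hm : ¬ p ∣ m)
    (hd : ∏ i, d i = 1) :
    (Matrix.diagonal d * cycleMatrix p ^ m) ^ p = 1 := by
  have hp0 : 0 < p := hp.pos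
  ext i j
  rw [head_pow_apply]
  have h1 : ((i : ℕ) + p * m) % p = (i : ℕ) % p := by
    rw [Nat.add_mul_mod_self_left]
  have h2 : (∏ s ∈ Finset.range p, d ⟨((i : ℕ) + s * m) % p, Nat.mod_lt _ i.pos⟩) = 1 := by
    rw [← hd]
    rw [← Fin.prod_univ_eq_prod_range (fun s => d ⟨((i : ℕ) + s * m) % p, Nat.mod_lt _ i.pos⟩) p]
    have hinj : Function.Injective (fun s : Fin p => (⟨((i : ℕ) + (s : ℕ) * m) % p, Nat.mod_lt _ i.pos⟩ : Fin p)) := by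
      intro s₁ s₂ h
      have h' : ((i : ℕ) + (s₁ : ℕ) * m) % p = ((i : ℕ) + (s₂ : ℕ) * m) % p := by
        simpa [Fin.ext_iff] using h
      have hme : (s₁ : ℕ) * m ≡ (s₂ : ℕ) * m [MOD p] := (Nat.ModEq.add_left_cancel' (i : ℕ) h')
      have hcop : Nat.gcd p m = 1 := (Nat.Prime.coprime_iff_not_dvd hp).mpr hm
      have : (s₁ : ℕ) ≡ (s₂ : ℕ) [MOD p] := hme.cancel_right_of_coprime hcop
      have : (s₁ : ℕ) % p = (s₂ : ℕ) % p := this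
      exact Fin.ext (by rwa [Nat.mod_eq_of_lt s₁.isLt, Nat.mod_eq_of_lt s₂.isLt] at this)
    exact Fintype.prod_bijective _ (Finite.injective_iff_bijective.mp hinj) _ _ (fun s => rfl)
  rw [h1, Nat.mod_eq_of_lt i.isLt, h2, Matrix.one_apply]
  simp [Fin.ext_iff, eq_comm]

lemma mem_spectrum_iff_det' {n : Type*} [Fintype n] [DecidableEq n]
    (M : Matrix n n ℂ) (γ : ℂ) :
    γ ∈ spectrum ℂ M ↔ (γ • (1 : Matrix n n ℂ) - M).det = 0 := by
  rw [spectrum.mem_iff, Matrix.isUnit_iff_isUnit_det, isUnit_iff_ne_zero, not_not,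
    Algebra.algebraMap_eq_smul_one]

lemma pow_eq_one_of_mem_spectrum {n : Type*} [Fintype n] [DecidableEq n] [Nonempty n]
    {M : Matrix n n ℂ} {q : ℕ} (hM : M ^ q = 1) {γ : ℂ}
    (hγ : γ ∈ spectrum ℂ M) : γ ^ q = 1 := by
  rw [mem_spectrum_iff_det'] at hγ
  have hcomm : Commute ((γ : ℂ) • (1 : Matrix n n ℂ)) M :=
    Commute.smul_left (Commute.one_left M) γ
  have hgeo := hcomm.geom_sum₂_mul q
  have hx : ((γ : ℂ) • (1 : Matrix n n ℂ)) ^ q = γ ^ q • 1 := by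
    rw [smul_pow, one_pow]
  rw [hx, hM] at hgeo
  have hdet := congrArg Matrix.det hgeo
  rw [Matrix.det_mul, hγ, mul_zero] at hdet
  have h1 : (γ ^ q • (1 : Matrix n n ℂ) - 1) = (γ ^ q - 1) • 1 := by
    rw [sub_smul, one_smul]
  rw [h1, Matrix.det_smul, Matrix.det_one, mul_one] at hdet
  have h2 : (γ ^ q - 1) ^ Fintype.card n = 0 := hdet.symm
  have h3 : γ ^ q - 1 = 0 := by
    exact pow_eq_zero_iff (M₀ := ℂ) (Fintype.card_ne_zero (α := n)) |>.mp h2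
  linear_combination h3

lemma mem_spectrum_head (p : ℕ) (hp : p.Prime) (d : Fin p → ℂ) (m : ℕ) (hm : ¬ p ∣ m)
    (hd : ∏ i, d i = 1) {ζ : ℂ} (hζ : ζ ^ p = 1) :
    ζ ∈ spectrum ℂ (Matrix.diagonal d * cycleMatrix p ^ m) := by
  set M := Matrix.diagonal d * cycleMatrix p ^ m with hM
  set ω : ℂ := Complex.exp (2 * Real.pi * Complex.I / p) with hωdef
  have hω : IsPrimitiveRoot ω p := Complex.isPrimitiveRoot_exp p hp.ne_zero
  have hωp : ω ^ p = 1 := hω.pow_eq_one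
  have hωne : ω ≠ 0 := by simp [hωdef, Complex.exp_ne_zero]
  have key : ∀ a : ℕ, ω ^ a = ω ^ (a % p) := by
    intro a
    conv_lhs => rw [← Nat.div_add_mod a p]
    rw [pow_add, pow_mul, hωp, one_pow, one_mul]
  have ωmod : ∀ a b : ℕ, ((a : ZMod p) = (b : ZMod p)) → ω ^ a = ω ^ b := by
    intro a b h
    rw [key a, key b]
    congr 1
    exact (ZMod.natCast_eq_natCast_iff a b p).mp h
  -- inverse of m mod p
  obtain ⟨u, hu⟩ : ∃ u, m * u % p = 1 :=
    by obtain ⟨u, -, h⟩ := (Nat.exists_mul_mod_eq_one_of_coprime ((Nat.Prime.coprime_iff_not_dvd hp).mpr hm).symm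
      hp.one_lt); exact ⟨u, h⟩
  have humod : ((m : ZMod p) * (u : ZMod p)) = 1 := by
    have : (((m * u) % p : ℕ) : ZMod p) = ((1 : ℕ) : ZMod p) := by rw [hu]
    rwa [ZMod.natCast_mod, Nat.cast_mul, Nat.cast_one] at this
  have hpm1 : (((p - 1 : ℕ)) : ZMod p) = -1 := by
    rw [Nat.cast_sub hp.one_lt.le, ZMod.natCast_self, Nat.cast_one, zero_sub]
  set w : Fin p → ℂ := fun j => ω ^ ((p - 1) * ((j : ℕ) * u)) with hwdef
  set W : Matrix (Fin p) (Fin p) ℂ := Matrix.diagonal w with hWdef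
  have hdetW : W.det ≠ 0 := by
    rw [hWdef, Matrix.det_diagonal]
    exact Finset.prod_ne_zero_iff.mpr fun j _ => pow_ne_zero _ hωne
  have hWM : W * M = (ω • M) * W := by
    ext i j
    show (Matrix.diagonal w * M) i j = ((ω • M) * Matrix.diagonal w) i j
    rw [Matrix.diagonal_mul, Matrix.mul_diagonal, Matrix.smul_apply, hM, head_apply]
    by_cases hij : (j : ℕ) = ((i : ℕ) + m) % p
    · simp only [if_pos hij, smul_eq_mul]
      have hjz : (((j : ℕ) : ZMod p)) = ((i : ℕ) : ZMod p) + (m : ZMod p) := by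
        have h := congrArg (Nat.cast : ℕ → ZMod p) hij
        rwa [ZMod.natCast_mod, Nat.cast_add] at h
      have hwij : w i = ω * w j := by
        show ω ^ ((p - 1) * ((i : ℕ) * u)) = ω * ω ^ ((p - 1) * ((j : ℕ) * u))
        have h1 : ω * ω ^ ((p - 1) * ((j : ℕ) * u)) = ω ^ (1 + (p - 1) * ((j : ℕ) * u)) := by
          rw [pow_add, pow_one]
        rw [h1]
        apply ωmod
        push_cast [hpm1, hjz]
        linear_combination humod
      rw [hwij]
      ring
    · simp [if_neg hij]
  -- spectrum closed under division by ω
  have hstep : ∀ ζ' : ℂ, ζ' ∈ spectrum ℂ M → ζ' * ω⁻¹ ∈ spectrum ℂ M := by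
    intro ζ' hζ'
    rw [mem_spectrum_iff_det'] at hζ' ⊢
    have h1 : W * (ζ' • (1 : Matrix (Fin p) (Fin p) ℂ) - M)
        = (ζ' • (1 : Matrix (Fin p) (Fin p) ℂ) - ω • M) * W := by
      rw [Matrix.mul_sub, Matrix.sub_mul, hWM]
      congr 1
      rw [Matrix.mul_smul, Matrix.mul_one, Matrix.smul_mul, Matrix.one_mul]
    have h2 := congrArg Matrix.det h1
    rw [Matrix.det_mul, Matrix.det_mul, hζ', mul_zero] at h2
    have h3 : (ζ' • (1 : Matrix (Fin p) (Fin p) ℂ) - ω • M).det = 0 := by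
      rcases mul_eq_zero.mp h2.symm with h | h
      · exact h
      · exact absurd h hdetW
    have h4 : ζ' • (1 : Matrix (Fin p) (Fin p) ℂ) - ω • M
        = ω • ((ζ' * ω⁻¹) • (1 : Matrix (Fin p) (Fin p) ℂ) - M) := by
      rw [smul_sub, smul_smul]
      congr 2
      field_simp
    rw [h4, Matrix.det_smul] at h3
    rcases mul_eq_zero.mp h3 with h | h
    · exact absurd h (pow_ne_zero _ hωne)
    · exact h
  have hiter : ∀ t : ℕ, ∀ ζ' ∈ spectrum ℂ M, ζ' * (ω⁻¹) ^ t ∈ spectrum ℂ M := by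
    intro t
    induction t with
    | zero => intro ζ' h; simpa using h
    | succ t ih =>
      intro ζ' h
      have := hstep _ (ih ζ' h)
      rw [pow_succ, ← mul_assoc]
      exact this
  -- a base eigenvalue
  haveI : Nonempty (Fin p) := ⟨⟨0, hp.pos⟩⟩
  obtain ⟨ζ₀, hζ₀⟩ := spectrum.nonempty_of_isAlgClosed_of_finiteDimensional ℂ M
  have hMp : M ^ p = 1 := head_pow_self p hp d m hm hd
  have hζ₀p : ζ₀ ^ p = 1 := pow_eq_one_of_mem_spectrum hMp hζ₀
  have hζ₀ne : ζ₀ ≠ 0 := fun h => by simp [h, zero_pow hp.ne_zero] at hζ₀p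
  have hquot : (ζ / ζ₀) ^ p = 1 := by rw [div_pow, hζ, hζ₀p, div_one]
  haveI : NeZero p := ⟨hp.ne_zero⟩
  obtain ⟨s, hs, hωs⟩ := hω.eq_pow_of_pow_eq_one hquot
  have hζeq : ζ = ζ₀ * ω ^ s := by
    rw [hωs]
    field_simp
  have hfin := hiter ((p - 1) * s) ζ₀ hζ₀
  have hωinv : ω⁻¹ = ω ^ (p - 1) := by
    apply inv_eq_of_mul_eq_one_right
    rw [← pow_succ']
    have : p - 1 + 1 = p := Nat.succ_pred_eq_of_pos hp.pos
    rw [this, hωp]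
  have hpow : (ω⁻¹) ^ ((p - 1) * s) = ω ^ s := by
    rw [hωinv, ← pow_mul]
    apply ωmod
    push_cast [hpm1]
    ring
  rw [hpow, ← hζeq] at hfin
  exact hfin



lemma xi_pow (p : ℕ) (n : ℕ) :
    xi p ^ n = Complex.exp (2 * Real.pi * Complex.I * n / (p ^ 2)) := by
  rw [xi, ← Complex.exp_nat_mul]
  congr 1
  ring

lemma xi_pow_sq (p : ℕ) (hp : p ≠ 0) : xi p ^ (p ^ 2) = 1 := by
  rw [xi_pow]
  have hP : ((p : ℂ) ^ 2) ≠ 0 := pow_ne_zero 2 (Nat.cast_ne_zero.mpr hp)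
  push_cast
  rw [mul_div_assoc, div_self hP, mul_one, Complex.exp_two_pi_mul_I]

lemma xi_pow_mod (p : ℕ) (hp : p ≠ 0) (n : ℕ) : xi p ^ n = xi p ^ (n % p ^ 2) := by
  conv_lhs => rw [← Nat.div_add_mod n (p ^ 2)]
  rw [pow_add, pow_mul, xi_pow_sq p hp, one_pow, one_mul]

lemma xi_pow_eq_of_modeq (p : ℕ) (hp : p ≠ 0) {a b : ℕ} (h : a ≡ b [MOD p ^ 2]) :
    xi p ^ a = xi p ^ b := by
  have h' : a % p ^ 2 = b % p ^ 2 := h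
  rw [xi_pow_mod p hp a, xi_pow_mod p hp b, h']

lemma exists_xi_pow_close (p : ℕ) (hp3 : 3 ≤ p) (γ : ℂ) (hγ : ‖γ‖ = 1) :
    ∃ n : ℕ, |Complex.arg (xi p ^ n / γ)| ≤ Real.pi / (p : ℝ) ^ 2 := by
  have hπ : (0 : ℝ) < Real.pi := Real.pi_pos
  set θ : ℝ := Complex.arg γ with hθ
  have hγe : γ = Complex.exp (θ * Complex.I) := by
    conv_lhs => rw [← Complex.norm_mul_exp_arg_mul_I γ]
    rw [hγ, Complex.ofReal_one, one_mul]
  set P : ℝ := (p : ℝ) ^ 2 with hP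
  have hP0 : (0 : ℝ) < P := by positivity
  set z : ℤ := round (θ * P / (2 * Real.pi)) with hz
  have hround : |θ * P / (2 * Real.pi) - z| ≤ 1 / 2 := abs_sub_round _
  have hp2 : (0 : ℤ) < (p : ℤ) ^ 2 := by positivity
  set n : ℕ := (z % ((p : ℤ) ^ 2)).toNat with hn
  have hnz : (n : ℤ) = z % ((p : ℤ) ^ 2) := Int.toNat_of_nonneg (Int.emod_nonneg z hp2.ne')
  set q : ℤ := z / ((p : ℤ) ^ 2) with hq
  have hnzq : (n : ℤ) = z - (p : ℤ) ^ 2 * q := by rw [hnz, hq, Int.emod_def]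
  -- xi p ^ n as an exponential of z
  have hxi : xi p ^ n = Complex.exp (2 * Real.pi * Complex.I * z / (p : ℂ) ^ 2) := by
    rw [xi_pow]
    have hcast : (n : ℂ) = (z : ℂ) - (p : ℂ) ^ 2 * (q : ℂ) := by
      exact_mod_cast congrArg (fun t : ℤ => (t : ℂ)) hnzq
    rw [hcast]
    have hPc : ((p : ℂ) ^ 2) ≠ 0 :=
      pow_ne_zero 2 (Nat.cast_ne_zero.mpr (by omega : p ≠ 0))
    have : 2 * Real.pi * Complex.I * ((z : ℂ) - (p : ℂ) ^ 2 * (q : ℂ)) / (p : ℂ) ^ 2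
        = 2 * Real.pi * Complex.I * (z : ℂ) / (p : ℂ) ^ 2 + (-q : ℤ) * (2 * Real.pi * Complex.I) := by
      rw [div_add' _ _ _ hPc]
      congr 1
      push_cast
      ring
    rw [this, Complex.exp_add, Complex.exp_int_mul_two_pi_mul_I, mul_one]
  set δ : ℝ := 2 * Real.pi * z / P - θ with hδ
  have hquot : xi p ^ n / γ = Complex.exp ((δ : ℝ) * Complex.I) := by
    rw [hxi, hγe, ← Complex.exp_sub]
    congr 1
    push_cast [hδ, hP]
    have hPc2 : ((p : ℂ) ^ 2) ≠ 0 :=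
      pow_ne_zero 2 (Nat.cast_ne_zero.mpr (by omega : p ≠ 0))
    field_simp
  have hδbound : |δ| ≤ Real.pi / P := by
    have h1 : δ = (2 * Real.pi / P) * ((z : ℝ) - θ * P / (2 * Real.pi)) := by
      rw [hδ]
      field_simp
    rw [h1, abs_mul, abs_of_pos (by positivity : (0:ℝ) < 2 * Real.pi / P), abs_sub_comm]
    calc 2 * Real.pi / P * |θ * P / (2 * Real.pi) - (z : ℝ)|
        ≤ 2 * Real.pi / P * (1 / 2) := by
          apply mul_le_mul_of_nonneg_left hround (by positivity)
      _ = Real.pi / P := by ring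
  have hδlt : |δ| < Real.pi := by
    have h9 : (9 : ℝ) ≤ P := by
      rw [hP]
      have : (3 : ℝ) ≤ (p : ℝ) := by exact_mod_cast hp3
      nlinarith
    have : Real.pi / P < Real.pi := by
      rw [div_lt_iff₀ hP0]
      nlinarith
    linarith [hδbound]
  refine ⟨n, ?_⟩
  rw [hquot]
  have harg : Complex.arg (Complex.exp ((δ : ℝ) * Complex.I)) = δ := by
    rw [Complex.exp_mul_I]
    have hmem : δ ∈ Set.Ioc (-Real.pi) Real.pi := by
      constructor
      · cases abs_lt.mp hδlt with | intro h1 h2 => linarith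
      · cases abs_lt.mp hδlt with | intro h1 h2 => linarith
    have := Complex.arg_cos_add_sin_mul_I hmem
    simpa using this
  rw [harg]
  exact hδbound

lemma mem_spectrum_fromBlocks_iff' {n : Type*} [Fintype n] [DecidableEq n]
    (M N : Matrix n n ℂ) (γ : ℂ) :
    γ ∈ spectrum ℂ (fromBlocks M 0 0 N) ↔ γ ∈ spectrum ℂ M ∨ γ ∈ spectrum ℂ N := by
  rw [mem_spectrum_iff_det', mem_spectrum_iff_det', mem_spectrum_iff_det']
  have h : γ • (1 : Matrix (n ⊕ n) (n ⊕ n) ℂ) - fromBlocks M 0 0 N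
      = fromBlocks (γ • 1 - M) 0 0 (γ • 1 - N) := by
    rw [← Matrix.fromBlocks_one, Matrix.fromBlocks_smul, sub_eq_add_neg,
      Matrix.fromBlocks_neg, Matrix.fromBlocks_add]
    simp [sub_eq_add_neg]
  rw [h, Matrix.det_fromBlocks_zero₂₁, mul_eq_zero]

lemma mem_spectrum_diagonal_iff' {n : Type*} [Fintype n] [DecidableEq n]
    (d : n → ℂ) (γ : ℂ) :
    γ ∈ spectrum ℂ (diagonal d) ↔ ∃ i, d i = γ := by
  rw [mem_spectrum_iff_det']
  have h : γ • (1 : Matrix n n ℂ) - diagonal d = diagonal (fun i => γ - d i) := by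
    rw [← Matrix.diagonal_one, ← Matrix.diagonal_smul, Matrix.diagonal_sub]
    simp
  rw [h, Matrix.det_diagonal, Finset.prod_eq_zero_iff]
  simp [sub_eq_zero, eq_comm]

lemma cycleMatrix_pow_self (p : ℕ) : cycleMatrix p ^ p = 1 := by
  ext i j
  rw [cycleMatrix_pow_apply, Matrix.one_apply]
  have : ((i : ℕ) + p) % p = (i : ℕ) := by
    rw [Nat.add_mod_right, Nat.mod_eq_of_lt i.isLt]
  rw [this]
  simp [Fin.ext_iff, eq_comm]

lemma tadpole_mul (p : ℕ) (d e : Fin p → ℂ) (k l : ℕ) (a b : Fin p → ℕ) :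
    tadpole p d k a * tadpole p e l b
      = Matrix.fromBlocks
          ((Matrix.diagonal d * cycleMatrix p ^ k) * (Matrix.diagonal e * cycleMatrix p ^ l)) 0 0
          (Matrix.diagonal fun j : Fin p =>
            xi p ^ ((j : ℕ) * k + a j * p) * xi p ^ ((j : ℕ) * l + b j * p)) := by
  rw [tadpole, tadpole, Matrix.fromBlocks_multiply]
  simp [Matrix.diagonal_mul_diagonal]

lemma head_mul_head (p : ℕ) (hp0 : 0 < p) (d e : Fin p → ℂ) (k l : ℕ) :
    (Matrix.diagonal d * cycleMatrix p ^ k) * (Matrix.diagonal e * cycleMatrix p ^ l)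
      = Matrix.diagonal (fun i : Fin p => d i * e ⟨((i : ℕ) + k) % p, Nat.mod_lt _ hp0⟩)
          * cycleMatrix p ^ (k + l) := by
  have hcomm : cycleMatrix p ^ k * Matrix.diagonal e
      = Matrix.diagonal (fun i : Fin p => e ⟨((i : ℕ) + k) % p, Nat.mod_lt _ hp0⟩)
          * cycleMatrix p ^ k := by
    ext i j
    rw [Matrix.mul_diagonal, Matrix.diagonal_mul, cycleMatrix_pow_apply]
    by_cases hij : (j : ℕ) = ((i : ℕ) + k) % p
    · rw [if_pos hij]
      have hj : j = (⟨((i : ℕ) + k) % p, Nat.mod_lt _ hp0⟩ : Fin p) := Fin.ext hij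
      rw [hj]
      ring
    · simp [hij]
  rw [Matrix.mul_assoc, ← Matrix.mul_assoc (cycleMatrix p ^ k), hcomm,
    Matrix.mul_assoc, ← Matrix.mul_assoc, Matrix.diagonal_mul_diagonal, ← pow_add]

lemma prod_shift_eq (p : ℕ) (hp0 : 0 < p) (e : Fin p → ℂ) (k : ℕ) :
    (∏ i : Fin p, e ⟨((i : ℕ) + k) % p, Nat.mod_lt _ hp0⟩) = ∏ i, e i := by
  have hinj : Function.Injective
      (fun i : Fin p => (⟨((i : ℕ) + k) % p, Nat.mod_lt _ hp0⟩ : Fin p)) := by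
    intro i₁ i₂ h
    have h' : ((i₁ : ℕ) + k) % p = ((i₂ : ℕ) + k) % p := by simpa [Fin.ext_iff] using h
    have : (i₁ : ℕ) ≡ (i₂ : ℕ) [MOD p] := Nat.ModEq.add_right_cancel' k h'
    have h2 : (i₁ : ℕ) % p = (i₂ : ℕ) % p := this
    exact Fin.ext (by rwa [Nat.mod_eq_of_lt i₁.isLt, Nat.mod_eq_of_lt i₂.isLt] at h2)
  exact Fintype.prod_bijective _ (Finite.injective_iff_bijective.mp hinj) _ _ (fun s => rfl)

lemma tadpole_tail_mem_spectrum (p : ℕ) (d : Fin p → ℂ) (k : ℕ) (a : Fin p → ℕ) (j : Fin p) :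
    xi p ^ ((j : ℕ) * k + a j * p) ∈ spectrum ℂ (tadpole p d k a) := by
  rw [tadpole, mem_spectrum_fromBlocks_iff']
  right
  rw [mem_spectrum_diagonal_iff']
  exact ⟨j, rfl⟩

lemma tadpole_head_mem_spectrum (p : ℕ) (d : Fin p → ℂ) (k : ℕ) (a : Fin p → ℕ) {γ : ℂ}
    (h : γ ∈ spectrum ℂ (Matrix.diagonal d * cycleMatrix p ^ k)) :
    γ ∈ spectrum ℂ (tadpole p d k a) := by
  rw [tadpole, mem_spectrum_fromBlocks_iff']
  exact Or.inl h

lemma one_mem_spectrum_tadpole (p : ℕ) (hp0 : 0 < p) (d : Fin p → ℂ) (k : ℕ) (a : Fin p → ℕ)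
    (ha0 : ∀ j : Fin p, (j : ℕ) = 0 → a j = 0) :
    (1 : ℂ) ∈ spectrum ℂ (tadpole p d k a) := by
  have h := tadpole_tail_mem_spectrum p d k a ⟨0, hp0⟩
  have ha : a ⟨0, hp0⟩ = 0 := ha0 _ rfl
  simpa [ha] using h

lemma exact_case_bound (p : ℕ) {α β γ : ℂ} (h : α * β = γ) :
    1 / (2 * Real.pi) * |Complex.arg (α * β / γ)| ≤ 1 / (2 * (p : ℝ) ^ 2) := by
  have h2 : |Complex.arg (α * β / γ)| = 0 := by
    rcases eq_or_ne γ 0 with h0 | h0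
    · rw [h, h0, div_zero, Complex.arg_zero, abs_zero]
    · rw [h, div_self h0, Complex.arg_one, abs_zero]
  rw [h2, mul_zero]
  positivity


/-- The group `𝒯` of tadpole matrices is `1/(2p²)`-argument-submultiplicative:
for all `A, B ∈ 𝒯` and every eigenvalue `γ` of `AB`, there exist eigenvalues `α` of
`A` and `β` of `B` with `(1/2π)|arg(αβ/γ)| ≤ 1/(2p²)`. -/
theorem tadpole_group_argument_submultiplicative (p : ℕ) (hp : p.Prime) (hodd : Odd p)
    (A B : Matrix (Fin p ⊕ Fin p) (Fin p ⊕ Fin p) ℂ)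
    (hA : IsTadpole p A) (hB : IsTadpole p B)
    (γ : ℂ) (hγ : γ ∈ spectrum ℂ (A * B)) :
    ∃ α ∈ spectrum ℂ A, ∃ β ∈ spectrum ℂ B,
      1 / (2 * Real.pi) * |Complex.arg (α * β / γ)| ≤ 1 / (2 * (p : ℝ) ^ 2) := by
  obtain ⟨d, k, a, hd1, hd2, hk, ha, ha0, hAeq⟩ := hA
  obtain ⟨e, l, b, he1, he2, hl, hb, hb0, hBeq⟩ := hB
  subst hAeq
  subst hBeq
  have hp0 : 0 < p := hp.pos
  have hp3 : 3 ≤ p := by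
    obtain ⟨c, hc⟩ := hodd
    have := hp.two_le
    omega
  haveI : Nonempty (Fin p) := ⟨⟨0, hp0⟩⟩
  have hxine : xi p ≠ 0 := by rw [xi]; exact Complex.exp_ne_zero _
  set f : Fin p → ℂ := fun i => d i * e ⟨((i : ℕ) + k) % p, Nat.mod_lt _ hp0⟩ with hf
  have hfprod : ∏ i, f i = 1 := by
    rw [hf, Finset.prod_mul_distrib, hd2, prod_shift_eq p hp0 e k, he2, one_mul]
  rw [tadpole_mul, head_mul_head p hp0 d e k l, mem_spectrum_fromBlocks_iff'] at hγ
  rcases hγ with hγh | hγt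
  · -- head block
    by_cases hdvd : p ∣ (k + l)
    · -- C^(k+l) = 1, head is diagonal f
      have hkl : k + l = 0 ∨ k + l = p := by
        obtain ⟨c, hc⟩ := hdvd
        have hc2 : c < 2 := by nlinarith
        interval_cases c <;> omega
      have hC : cycleMatrix p ^ (k + l) = 1 := by
        rcases hkl with h | h
        · rw [h, pow_zero]
        · rw [h, cycleMatrix_pow_self]
      rw [hC, mul_one, mem_spectrum_diagonal_iff'] at hγh
      obtain ⟨i, hi⟩ := hγh
      by_cases hk0 : k = 0
      · -- k = l = 0 : exact case with diagonal entries
        have hl0 : l = 0 := by omega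
        have hii : (⟨((i : ℕ) + k) % p, Nat.mod_lt _ hp0⟩ : Fin p) = i := by
          apply Fin.ext
          simp [hk0, Nat.mod_eq_of_lt i.isLt]
        refine ⟨d i, ?_, e i, ?_, ?_⟩
        · apply tadpole_head_mem_spectrum
          rw [hk0, pow_zero, mul_one, mem_spectrum_diagonal_iff']
          exact ⟨i, rfl⟩
        · apply tadpole_head_mem_spectrum
          rw [hl0, pow_zero, mul_one, mem_spectrum_diagonal_iff']
          exact ⟨i, rfl⟩
        · apply exact_case_bound p
          rw [← hi, hii]
      · -- approximate case
        have hknd : ¬ p ∣ k := fun h => hk0 (Nat.eq_zero_of_dvd_of_lt h hk)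
        have hl0 : l ≠ 0 := by
          intro h
          exact hk0 (Nat.eq_zero_of_dvd_of_lt (by simpa [h] using hdvd) hk)
        have hlnd : ¬ p ∣ l := fun h => hl0 (Nat.eq_zero_of_dvd_of_lt h hl)
        have hγabs : ‖γ‖ = 1 := by
          rw [← hi]
          simp only [norm_mul, hd1, he1, mul_one]
        obtain ⟨n, hn⟩ := exists_xi_pow_close p hp3 γ hγabs
        obtain ⟨u, hu⟩ : ∃ u, k * u % p = 1 :=
          by obtain ⟨u, -, h⟩ := (Nat.exists_mul_mod_eq_one_of_coprime
            ((Nat.Prime.coprime_iff_not_dvd hp).mpr hknd).symm hp.one_lt); exact ⟨u, h⟩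
        set j : Fin p := ⟨n * u % p, Nat.mod_lt _ hp0⟩ with hj
        set E : ℕ := (j : ℕ) * k + a j * p with hE
        set α : ℂ := xi p ^ E with hα
        have hα0 : α ≠ 0 := pow_ne_zero _ hxine
        set β : ℂ := xi p ^ n / α with hβ
        have hmodE : E ≡ n [MOD p] := by
          have h1 : k * u ≡ 1 [MOD p] := by
            show k * u % p = 1 % p
            rw [hu, Nat.mod_eq_of_lt hp.one_lt]
          have h2 : (j : ℕ) ≡ n * u [MOD p] := Nat.mod_modEq (n * u) p
          have h3 : (j : ℕ) * k ≡ n * u * k [MOD p] := h2.mul_right k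
          have h4 : n * (k * u) ≡ n * 1 [MOD p] := h1.mul_left n
          have h5 : (j : ℕ) * k ≡ n [MOD p] := by
            calc (j : ℕ) * k ≡ n * u * k [MOD p] := h3
              _ = n * (k * u) := by ring
              _ ≡ n * 1 [MOD p] := h4
              _ = n := by ring
          have h6 : a j * p ≡ 0 [MOD p] :=
            (Nat.modEq_zero_iff_dvd).mpr ⟨a j, mul_comm _ _⟩
          calc E = (j : ℕ) * k + a j * p := rfl
            _ ≡ n + 0 [MOD p] := h5.add h6
            _ = n := by ring
        have hβp : β ^ p = 1 := by
          rw [hβ, div_pow, hα, ← pow_mul, ← pow_mul]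
          have hmm : n * p ≡ E * p [MOD p ^ 2] := by
            rw [pow_two]
            exact (hmodE.symm).mul_right' p
          rw [xi_pow_eq_of_modeq p (by omega) hmm]
          exact div_self (pow_ne_zero _ hxine)
        refine ⟨α, tadpole_tail_mem_spectrum p d k a j, β, ?_, ?_⟩
        · apply tadpole_head_mem_spectrum
          exact mem_spectrum_head p hp e l hlnd he2 hβp
        · have hαβ : α * β = xi p ^ n := by
            rw [hβ, mul_comm]
            exact div_mul_cancel₀ _ hα0
          rw [hαβ]
          have hπ : (0 : ℝ) < Real.pi := Real.pi_pos
          calc 1 / (2 * Real.pi) * |Complex.arg (xi p ^ n / γ)|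
              ≤ 1 / (2 * Real.pi) * (Real.pi / (p : ℝ) ^ 2) := by
                apply mul_le_mul_of_nonneg_left hn (by positivity)
            _ = 1 / (2 * (p : ℝ) ^ 2) := by
                rw [div_mul_div_comm, one_mul]
                rw [div_eq_div_iff (by positivity) (by positivity)]
                ring
        
    · -- ¬ p ∣ (k+l): all head eigenvalues are p-th roots of unity
      have hγp : γ ^ p = 1 :=
        pow_eq_one_of_mem_spectrum (head_pow_self p hp f (k + l) hdvd hfprod) hγh
      by_cases hk0 : k = 0
      · have hlnd : ¬ p ∣ l := by
          intro h
          exact hdvd (by simpa [hk0] using h)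
        refine ⟨1, one_mem_spectrum_tadpole p hp0 d k a ha0, γ, ?_, ?_⟩
        · exact tadpole_head_mem_spectrum p e l b (mem_spectrum_head p hp e l hlnd he2 hγp)
        · exact exact_case_bound p (one_mul γ)
      · have hknd : ¬ p ∣ k := fun h => hk0 (Nat.eq_zero_of_dvd_of_lt h hk)
        refine ⟨γ, ?_, 1, one_mem_spectrum_tadpole p hp0 e l b hb0, ?_⟩
        · exact tadpole_head_mem_spectrum p d k a (mem_spectrum_head p hp d k hknd hd2 hγp)
        · exact exact_case_bound p (mul_one γ)
  · -- tail block: exact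
    rw [mem_spectrum_diagonal_iff'] at hγt
    obtain ⟨j, hj⟩ := hγt
    exact ⟨_, tadpole_tail_mem_spectrum p d k a j, _, tadpole_tail_mem_spectrum p e l b j,
      exact_case_bound p hj⟩
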